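/- Let n ≥ 3 and suppose either d = 2 and n is odd, or d ≥ 3. Let M = {(x₁,…,xₙ) ∈ (ℝ^d)ⁿ : the xᵢ are pairwise distinct}, equipped with the subspace topology from (ℝ^d)ⁿ, and let A = {(x₁,…,xₙ) ∈ M : Alice wins for the voter set S = {x₁,…,xₙ}}. Then A is nowhere dense in M. -/

import Mathlib

open scoped RealInnerProductSpace

/-- `claims S a b` is the number of voters in `S` strictly closer to `a` than to `b`.
Thus `V_A(a,b) = claims S a b` and `V_B(a,b) = claims S b a`. -/
noncomputable def claims {d : ℕ} (S : Finset (EuclideanSpace ℝ (Fin d)))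
    (a b : EuclideanSpace ℝ (Fin d)) : ℕ :=
  (S.filter fun x => dist a x < dist b x).card

/-- `a` is a winning point for Alice: `V_A(a,b) ≥ V_B(a,b)` for every `b`. -/
def IsWinningPoint {d : ℕ} (S : Finset (EuclideanSpace ℝ (Fin d)))
    (a : EuclideanSpace ℝ (Fin d)) : Prop :=
  ∀ b : EuclideanSpace ℝ (Fin d), claims S b a ≤ claims S a b

section Generic

variable {V : Type*} [AddCommGroup V] [Module ℝ V]

/-- Finitely many nonzero functionals admit a common non-vanishing point. -/
lemma exists_forall_ne_zero (s : Finset (V →ₗ[ℝ] ℝ)) (hs : ∀ f ∈ s, f ≠ 0) :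
    ∃ u : V, ∀ f ∈ s, f u ≠ 0 := by
  classical
  induction s using Finset.induction_on with
  | empty => exact ⟨0, by simp⟩
  | @insert f s hfs ih =>
    obtain ⟨u, hu⟩ := ih fun g hg => hs g (Finset.mem_insert_of_mem hg)
    by_cases hfu : f u = 0
    · have hf : f ≠ 0 := hs f (Finset.mem_insert_self f s)
      obtain ⟨w, hw⟩ : ∃ w, f w ≠ 0 := by
        by_contra h
        push_neg at h
        exact hf (by ext v; simp [h v])
      obtain ⟨t, ht⟩ := Infinite.exists_notMem_finset
        (insert (0:ℝ) (s.image fun g => -(g u)/(g w)))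
      refine ⟨u + t • w, ?_⟩
      intro g hg
      rcases Finset.mem_insert.1 hg with rfl | hg
      · simp only [map_add, map_smul, hfu, smul_eq_mul, zero_add]
        have ht0 : t ≠ 0 := fun h => ht (h ▸ Finset.mem_insert_self _ _)
        exact mul_ne_zero ht0 hw
      · simp only [map_add, map_smul, smul_eq_mul]
        intro hzero
        by_cases hgw : g w = 0
        · exact hu g hg (by simpa [hgw] using hzero)
        · apply ht
          refine Finset.mem_insert_of_mem (Finset.mem_image.2 ⟨g, hg, ?_⟩)
          field_simp
          linarith
    · exact ⟨u, fun g hg => by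
        rcases Finset.mem_insert.1 hg with rfl | hg
        · exact hfu
        · exact hu g hg⟩

end Generic

section Inner

variable {E : Type*} [NormedAddCommGroup E] [InnerProductSpace ℝ E] [FiniteDimensional ℝ E]

/-- Generic vector orthogonal to `K` but not orthogonal to any member of `T` (none
of which lie in `K`). -/
lemma exists_generic (K : Submodule ℝ E) (T : Finset E) (hT : ∀ v ∈ T, v ∉ K) :
    ∃ u : E, u ∈ Kᗮ ∧ ∀ v ∈ T, ⟪v, u⟫ ≠ 0 := by
  classical
  have key : ∀ v ∈ T.image (fun v => (innerSL ℝ v).toLinearMap.comp Kᗮ.subtype),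
      v ≠ 0 := by
    intro f hf
    obtain ⟨v, hv, rfl⟩ := Finset.mem_image.1 hf
    intro hzero
    apply hT v hv
    have : v ∈ Kᗮᗮ := by
      rw [Submodule.mem_orthogonal]
      intro w hw
      have := congrFun (congrArg DFunLike.coe hzero) ⟨w, hw⟩
      simpa [real_inner_comm] using this
    rwa [Submodule.orthogonal_orthogonal] at this
  obtain ⟨u, hu⟩ := exists_forall_ne_zero _ key
  refine ⟨u.1, u.2, fun v hv => ?_⟩
  have := hu _ (Finset.mem_image.2 ⟨v, hv, rfl⟩)
  simpa using this

end Inner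

open Cardinal

section Geom

variable {E : Type*} [NormedAddCommGroup E] [InnerProductSpace ℝ E] [FiniteDimensional ℝ E]

lemma vectorSpan_le_of_sub_mem {a : E} {U : Submodule ℝ E} {s : Set E}
    (h : ∀ p ∈ s, p - a ∈ U) : vectorSpan ℝ s ≤ U := by
  rw [vectorSpan_def]
  apply Submodule.span_le.2
  rintro z hz
  obtain ⟨p, hp, q, hq, rfl⟩ := Set.mem_vsub.1 hz
  have : p -ᵥ q = (p - a) - (q - a) := by rw [vsub_eq_sub]; abel
  rw [this]
  exact Submodule.sub_mem U (h p hp) (h q hq)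

lemma collinear_of_sub_mem_span {a v : E} {s : Set E}
    (h : ∀ p ∈ s, p - a ∈ Submodule.span ℝ {v}) : Collinear ℝ s := by
  unfold Collinear
  calc Module.rank ℝ (vectorSpan ℝ s) ≤ Module.rank ℝ (Submodule.span ℝ {v}) :=
        Submodule.rank_mono (vectorSpan_le_of_sub_mem h)
    _ ≤ #({v} : Set E) := rank_span_le _
    _ = 1 := Cardinal.mk_singleton v

lemma coplanar_of_sub_mem_span {a v w : E} {s : Set E}
    (h : ∀ p ∈ s, p - a ∈ Submodule.span ℝ {v, w}) : Coplanar ℝ s := by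
  unfold Coplanar
  calc Module.rank ℝ (vectorSpan ℝ s) ≤ Module.rank ℝ (Submodule.span ℝ {v, w}) :=
        Submodule.rank_mono (vectorSpan_le_of_sub_mem h)
    _ ≤ #({v, w} : Set E) := rank_span_le _
    _ ≤ 2 := by
        refine (Cardinal.mk_insert_le).trans ?_
        rw [Cardinal.mk_singleton]
        norm_num

lemma span_pair_ne_top (hd : 2 < Module.finrank ℝ E) (v w : E) :
    Submodule.span ℝ {v, w} ≠ ⊤ := by
  intro h
  have h1 : Module.rank ℝ E ≤ 2 := by
    rw [← rank_top ℝ E, ← h]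
    refine (rank_span_le _).trans ?_
    refine (Cardinal.mk_insert_le).trans ?_
    rw [Cardinal.mk_singleton]
    norm_num
  have h2 := Cardinal.toNat_le_toNat h1 (Cardinal.nat_lt_aleph0 2)
  rw [Cardinal.toNat_ofNat] at h2
  have : Module.finrank ℝ E = (Module.rank ℝ E).toNat := rfl
  omega

lemma span_singleton_ne_top (hd : 1 < Module.finrank ℝ E) (v : E) :
    Submodule.span ℝ {v} ≠ ⊤ := by
  intro h
  have h1 : Module.rank ℝ E ≤ 1 := by
    rw [← rank_top ℝ E, ← h]
    refine (rank_span_le _).trans ?_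
    rw [Cardinal.mk_singleton]
  have h2 := Cardinal.toNat_le_toNat h1 (Cardinal.nat_lt_aleph0 1)
  simp only [map_one] at h2
  have : Module.finrank ℝ E = (Module.rank ℝ E).toNat := rfl
  omega

/-- Near any point we can find a point whose difference from `c` avoids a proper
subspace `W`. -/
lemma exists_near_sub_notMem {W : Submodule ℝ E} (hW : W ≠ ⊤) (c p : E) {ε : ℝ}
    (hε : 0 < ε) : ∃ q : E, dist q p < ε ∧ q - c ∉ W := by
  by_contra h
  push_neg at h
  apply hW
  apply Submodule.eq_top_of_nonempty_interior'
  refine ⟨p - c, ?_⟩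
  rw [mem_interior]
  refine ⟨Metric.ball (p - c) ε, ?_, Metric.isOpen_ball, Metric.mem_ball_self hε⟩
  intro z hz
  have : dist (z + c) p < ε := by
    rw [Metric.mem_ball, dist_eq_norm] at hz
    rw [dist_eq_norm]
    have : z + c - p = z - (p - c) := by abel
    rw [this]
    exact hz
  have := h (z + c) this
  simpa using this

end Geom

section EuclidPart

variable {d : ℕ}

local notation "E" => EuclideanSpace ℝ (Fin d)

open Finset in
/-- The halfspace condition: a winning point has at most half of the voters in every
open halfspace whose boundary passes through it. -/
lemma halfspace_of_winning {S : Finset E} {a : E} (hw : IsWinningPoint S a)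
    {u : E} (hu : u ≠ 0) :
    2 * (S.filter fun x => 0 < ⟪x - a, u⟫).card ≤ S.card := by
  classical
  set T := S.filter fun x => 0 < ⟪x - a, u⟫ with hT
  rcases T.eq_empty_or_nonempty with hTe | hTne
  · simp [hTe]
  have himg : (T.image fun x => ⟪x - a, u⟫).Nonempty := hTne.image _
  set m := (T.image fun x => ⟪x - a, u⟫).min' himg with hm
  have hm_pos : 0 < m := by
    obtain ⟨x, hx, hxm⟩ := Finset.mem_image.1 ((T.image fun x => ⟪x - a, u⟫).min'_mem himg)
    rw [hm, ← hxm]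
    exact (Finset.mem_filter.1 hx).2
  have hm_le : ∀ x ∈ T, m ≤ ⟪x - a, u⟫ := fun x hx =>
    Finset.min'_le _ _ (Finset.mem_image.2 ⟨x, hx, rfl⟩)
  have hu2 : (0:ℝ) < ‖u‖^2 := by
    have := norm_pos_iff.mpr hu
    positivity
  set c : ℝ := m / ‖u‖^2 with hc
  have hc_pos : 0 < c := div_pos hm_pos hu2
  have hcu : c * ‖u‖^2 = m := by rw [hc]; field_simp
  set b : E := a + c • u with hb
  -- key computation
  have key : ∀ x : E, (dist b x < dist a x ↔ m / 2 < ⟪x - a, u⟫) ∧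
      (dist a x < dist b x ↔ ⟪x - a, u⟫ < m / 2) := by
    intro x
    have hexp : dist b x ^ 2 = dist a x ^2 + 2 * (c * ⟪a - x, u⟫) + c^2 * ‖u‖^2 := by
      rw [dist_eq_norm, dist_eq_norm]
      have : b - x = (a - x) + c • u := by rw [hb]; abel
      rw [this, norm_add_sq_real, real_inner_smul_right, norm_smul, Real.norm_eq_abs,
        mul_pow, sq_abs] <;> ring
    have hiax : ⟪a - x, u⟫ = - ⟪x - a, u⟫ := by
      have hax : a - x = -(x - a) := by abel
      rw [hax, inner_neg_left]
    have hd1 : (0:ℝ) ≤ dist b x := dist_nonneg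
    have hd2 : (0:ℝ) ≤ dist a x := dist_nonneg
    constructor
    · constructor
      · intro h
        have h2 : dist b x ^ 2 < dist a x ^ 2 := by nlinarith
        rw [hexp, hiax] at h2
        nlinarith
      · intro h
        have h2 : dist b x ^2 < dist a x ^2 := by
          rw [hexp, hiax]; nlinarith
        nlinarith
    · constructor
      · intro h
        have h2 : dist a x ^ 2 < dist b x ^ 2 := by nlinarith
        rw [hexp, hiax] at h2
        nlinarith
      · intro h
        have h2 : dist a x ^2 < dist b x ^2 := by
          rw [hexp, hiax]; nlinarith
        nlinarith
  have hba : claims S b a = T.card := by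
    unfold claims
    congr 1
    apply Finset.filter_congr
    intro x hxS
    rw [(key x).1]
    constructor
    · intro h
      exact (by nlinarith : (0:ℝ) < ⟪x - a, u⟫)
    · intro h
      have : x ∈ T := Finset.mem_filter.2 ⟨hxS, h⟩
      have := hm_le x this
      nlinarith
  have hab : claims S a b = S.card - T.card := by
    unfold claims
    have : S.filter (fun x => dist a x < dist b x) = S \ T := by
      ext x
      rw [Finset.mem_filter, Finset.mem_sdiff]
      constructor
      · rintro ⟨hxS, h⟩
        rw [(key x).2] at h
        refine ⟨hxS, fun hx => ?_⟩
        have := hm_le x hx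
        nlinarith
      · rintro ⟨hxS, hx⟩
        have hnot : ¬ (0 < ⟪x - a, u⟫) := fun h => hx (Finset.mem_filter.2 ⟨hxS, h⟩)
        push_neg at hnot
        exact ⟨hxS, (key x).2.2 (by nlinarith)⟩
    rw [this, Finset.card_sdiff_of_subset (Finset.filter_subset _ _)]
  have := hw b
  rw [hba, hab] at this
  have hTS : T.card ≤ S.card := Finset.card_le_card (Finset.filter_subset _ _)
  omega

open Finset in
/-- The push lemma: perturbing the direction `u` towards `w` keeps all strictly
positive voters positive and makes the `w`-positive boundary voters positive. -/
lemma push_lemma {S : Finset E} {a : E}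
    (Hhalf : ∀ v : E, v ≠ 0 → 2 * (S.filter fun x => 0 < ⟪x - a, v⟫).card ≤ S.card)
    (u w : E)
    (hne : (S.filter fun x => ⟪x - a, u⟫ = 0 ∧ 0 < ⟪x - a, w⟫).Nonempty) :
    2 * ((S.filter fun x => 0 < ⟪x - a, u⟫).card
      + (S.filter fun x => ⟪x - a, u⟫ = 0 ∧ 0 < ⟪x - a, w⟫).card) ≤ S.card := by
  classical
  set P := S.filter fun x => 0 < ⟪x - a, u⟫ with hP
  set T := S.filter fun x => ⟪x - a, u⟫ = 0 ∧ 0 < ⟪x - a, w⟫ with hT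
  set B : Finset ℝ := insert (1:ℝ) (P.image fun x => ⟪x - a, u⟫ / (|⟪x - a, w⟫| + 1)) with hB
  have hBne : B.Nonempty := ⟨1, Finset.mem_insert_self _ _⟩
  set δ := B.min' hBne with hδ
  have hδ_pos : 0 < δ := by
    have := B.min'_mem hBne
    rw [← hδ] at this
    rcases Finset.mem_insert.1 this with h1 | h2
    · rw [h1]; norm_num
    · obtain ⟨x, hx, hxe⟩ := Finset.mem_image.1 h2
      rw [← hxe]
      have hpos := (Finset.mem_filter.1 hx).2
      positivity
  set u' : E := u + δ • w with hu'
  have hsub : P ∪ T ⊆ S.filter fun x => 0 < ⟪x - a, u'⟫ := by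
    intro x hx
    have hinner : ⟪x - a, u'⟫ = ⟪x - a, u⟫ + δ * ⟪x - a, w⟫ := by
      rw [hu', inner_add_right, real_inner_smul_right]
    rcases Finset.mem_union.1 hx with hxP | hxT
    · have hxS := (Finset.mem_filter.1 hxP).1
      have hA := (Finset.mem_filter.1 hxP).2
      refine Finset.mem_filter.2 ⟨hxS, ?_⟩
      have hble : δ ≤ ⟪x - a, u⟫ / (|⟪x - a, w⟫| + 1) :=
        Finset.min'_le _ _ (Finset.mem_insert_of_mem (Finset.mem_image.2 ⟨x, hxP, rfl⟩))
      have habs : (0:ℝ) < |⟪x - a, w⟫| + 1 := by positivity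
      have hble' : δ * (|⟪x - a, w⟫| + 1) ≤ ⟪x - a, u⟫ := by
        rw [← le_div_iff₀ habs]; exact hble
      have hwge : -|⟪x - a, w⟫| ≤ ⟪x - a, w⟫ := neg_abs_le _
      rw [hinner]
      nlinarith
    · have hxS := (Finset.mem_filter.1 hxT).1
      obtain ⟨hz, hwpos⟩ := (Finset.mem_filter.1 hxT).2
      refine Finset.mem_filter.2 ⟨hxS, ?_⟩
      rw [hinner, hz, zero_add]
      positivity
  have hu'_ne : u' ≠ 0 := by
    obtain ⟨x, hx⟩ := hne
    have hx' := hsub (Finset.mem_union_right _ hx)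
    intro h0
    have := (Finset.mem_filter.1 hx').2
    rw [h0, inner_zero_right] at this
    exact lt_irrefl _ this
  have hdisj : Disjoint P T := by
    rw [Finset.disjoint_left]
    intro x hxP hxT
    have h1 := (Finset.mem_filter.1 hxP).2
    have h2 := (Finset.mem_filter.1 hxT).2.1
    rw [h2] at h1
    exact lt_irrefl _ h1
  calc 2 * (P.card + T.card) = 2 * (P ∪ T).card := by
        rw [Finset.card_union_of_disjoint hdisj]
    _ ≤ 2 * (S.filter fun x => 0 < ⟪x - a, u'⟫).card := by
        have := Finset.card_le_card hsub
        omega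
    _ ≤ S.card := Hhalf u' hu'_ne

end EuclidPart
section Core

variable {E : Type*} [NormedAddCommGroup E] [InnerProductSpace ℝ E] [FiniteDimensional ℝ E]

open Finset

lemma count_partition (S : Finset E) (a u : E) :
    (S.filter fun x => 0 < ⟪x - a, u⟫).card + (S.filter fun x => 0 < ⟪x - a, -u⟫).card
      + (S.filter fun x => ⟪x - a, u⟫ = 0).card = S.card := by
  classical
  have e1 : S.filter (fun x => 0 < ⟪x - a, -u⟫)
      = S.filter (fun x => ¬ (0 < ⟪x - a, u⟫) ∧ ¬ (⟪x - a, u⟫ = 0)) := by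
    ext x
    simp only [Finset.mem_filter, inner_neg_right]
    constructor
    · rintro ⟨hS, h⟩
      exact ⟨hS, by constructor <;> intro h' <;> [linarith; (rw [h'] at h; linarith)]⟩
    · rintro ⟨hS, h1, h2⟩
      refine ⟨hS, ?_⟩
      rcases lt_trichotomy (⟪x - a, u⟫) 0 with h | h | h
      · linarith
      · exact absurd h h2
      · exact absurd h h1
  have e2 : S.filter (fun x => ⟪x - a, u⟫ = 0)
      = S.filter (fun x => ¬ (0 < ⟪x - a, u⟫) ∧ (⟪x - a, u⟫ = 0)) := by
    ext x
    simp only [Finset.mem_filter]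
    constructor
    · rintro ⟨hS, h⟩
      exact ⟨hS, by rw [h]; simp, h⟩
    · rintro ⟨hS, _, h⟩
      exact ⟨hS, h⟩
  rw [e1, e2]
  set F1 := S.filter (fun x => 0 < ⟪x - a, u⟫) with hF1
  set F2 := S.filter (fun x => ¬ (0 < ⟪x - a, u⟫) ∧ ¬ (⟪x - a, u⟫ = 0)) with hF2
  set F3 := S.filter (fun x => ¬ (0 < ⟪x - a, u⟫) ∧ (⟪x - a, u⟫ = 0)) with hF3
  have hd12 : Disjoint F1 F2 := by
    rw [Finset.disjoint_left]
    intro x h1 h2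
    exact ((Finset.mem_filter.1 h2).2.1) ((Finset.mem_filter.1 h1).2)
  have hd123 : Disjoint (F1 ∪ F2) F3 := by
    rw [Finset.disjoint_left]
    intro x h1 h3
    rcases Finset.mem_union.1 h1 with h | h
    · exact ((Finset.mem_filter.1 h3).2.1) ((Finset.mem_filter.1 h).2)
    · exact ((Finset.mem_filter.1 h).2.2) ((Finset.mem_filter.1 h3).2.2)
  have hun : F1 ∪ F2 ∪ F3 = S := by
    ext x
    simp only [Finset.mem_union, hF1, hF2, hF3, Finset.mem_filter]
    constructor
    · rintro ((h | h) | h) <;> exact h.1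
    · intro hx
      by_cases h1 : 0 < ⟪x - a, u⟫
      · exact Or.inl (Or.inl ⟨hx, h1⟩)
      · by_cases h2 : ⟪x - a, u⟫ = 0
        · exact Or.inr ⟨hx, h1, h2⟩
        · exact Or.inl (Or.inr ⟨hx, h1, h2⟩)
  calc F1.card + F2.card + F3.card
      = (F1 ∪ F2).card + F3.card := by rw [Finset.card_union_of_disjoint hd12]
    _ = (F1 ∪ F2 ∪ F3).card := by rw [Finset.card_union_of_disjoint hd123]
    _ = S.card := by rw [hun]

variable {d : ℕ}

lemma double_push {S : Finset (EuclideanSpace ℝ (Fin d))} {a u w : EuclideanSpace ℝ (Fin d)}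
    (Hhalf : ∀ v : EuclideanSpace ℝ (Fin d), v ≠ 0 →
      2 * (S.filter fun x => 0 < ⟪x - a, v⟫).card ≤ S.card)
    (hne : (S.filter fun x => ⟪x - a, u⟫ = 0 ∧ 0 < ⟪x - a, w⟫).Nonempty) :
    2 * ((S.filter fun x => 0 < ⟪x - a, u⟫).card
        + (S.filter fun x => ⟪x - a, u⟫ = 0 ∧ 0 < ⟪x - a, w⟫).card) ≤ S.card ∧
    2 * ((S.filter fun x => 0 < ⟪x - a, -u⟫).card
        + (S.filter fun x => ⟪x - a, u⟫ = 0 ∧ 0 < ⟪x - a, w⟫).card) ≤ S.card := by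
  classical
  refine ⟨push_lemma Hhalf u w hne, ?_⟩
  have e : (S.filter fun x => ⟪x - a, -u⟫ = 0 ∧ 0 < ⟪x - a, w⟫)
      = (S.filter fun x => ⟪x - a, u⟫ = 0 ∧ 0 < ⟪x - a, w⟫) := by
    ext x
    simp [inner_neg_right, neg_eq_zero]
  have := push_lemma Hhalf (-u) w (by rw [e]; exact hne)
  rwa [e] at this
end Core
section MainCore

variable {d : ℕ}

local notation "E" => EuclideanSpace ℝ (Fin d)

def HasCollinearTriple (S : Finset (EuclideanSpace ℝ (Fin d))) : Prop :=
  ∃ p ∈ S, ∃ q ∈ S, ∃ r ∈ S, p ≠ q ∧ p ≠ r ∧ q ≠ r ∧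
    Collinear ℝ ({p, q, r} : Set (EuclideanSpace ℝ (Fin d)))

def HasCoplanarQuad (S : Finset (EuclideanSpace ℝ (Fin d))) : Prop :=
  ∃ p ∈ S, ∃ q ∈ S, ∃ r ∈ S, ∃ t ∈ S, p ≠ q ∧ p ≠ r ∧ p ≠ t ∧ q ≠ r ∧ q ≠ t ∧ r ≠ t ∧
    Coplanar ℝ ({p, q, r, t} : Set (EuclideanSpace ℝ (Fin d)))

lemma notMem_span_of_no_collinear {S : Finset E} {a : E} (haS : a ∈ S)
    (hnc : ¬ HasCollinearTriple S) {x y : E} (hx : x ∈ S) (hy : y ∈ S)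
    (hxa : x ≠ a) (hya : y ≠ a) (hyx : y ≠ x) :
    y - a ∉ Submodule.span ℝ {x - a} := by
  intro hmem
  apply hnc
  refine ⟨a, haS, x, hx, y, hy, Ne.symm hxa, Ne.symm hya, fun h => hyx h.symm, ?_⟩
  apply collinear_of_sub_mem_span (a := a) (v := x - a)
  intro p hp
  rcases hp with rfl | rfl | rfl
  · simp
  · exact Submodule.mem_span_singleton_self _
  · exact hmem

lemma mem_of_odd {S : Finset E} {a : E} (hcard : 3 ≤ S.card) (hodd : Odd S.card)
    (Hhalf : ∀ v : E, v ≠ 0 → 2 * (S.filter fun x => 0 < ⟪x - a, v⟫).card ≤ S.card) :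
    a ∈ S := by
  classical
  by_contra haS
  have key : ∀ v ∈ S.image (fun x => x - a), v ∉ (⊥ : Submodule ℝ E) := by
    rintro v hv
    obtain ⟨x, hx, rfl⟩ := Finset.mem_image.1 hv
    rw [Submodule.mem_bot, sub_eq_zero]
    exact fun h => haS (h ▸ hx)
  obtain ⟨u, -, hu⟩ := exists_generic ⊥ _ key
  have hzero : S.filter (fun x => ⟪x - a, u⟫ = 0) = ∅ := by
    rw [Finset.filter_eq_empty_iff]
    intro x hx
    exact hu _ (Finset.mem_image.2 ⟨x, hx, rfl⟩)
  have hSne : S.Nonempty := Finset.card_pos.1 (by omega)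
  obtain ⟨x, hx⟩ := hSne
  have hu0 : u ≠ 0 := by
    intro h0
    apply hu (x - a) (Finset.mem_image.2 ⟨x, hx, rfl⟩)
    rw [h0, inner_zero_right]
  have h1 := Hhalf u hu0
  have h2 := Hhalf (-u) (neg_ne_zero.2 hu0)
  have h3 := count_partition S a u
  rw [hzero] at h3
  simp only [Finset.card_empty, add_zero] at h3
  obtain ⟨k, hk⟩ := hodd
  omega

lemma core_odd {S : Finset E} {a : E} (hcard : 3 ≤ S.card) (hodd : Odd S.card)
    (Hhalf : ∀ v : E, v ≠ 0 → 2 * (S.filter fun x => 0 < ⟪x - a, v⟫).card ≤ S.card) :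
    HasCollinearTriple S := by
  classical
  by_contra hnc
  have haS := mem_of_odd hcard hodd Hhalf
  have h1 : (S.erase a).Nonempty := by
    rw [← Finset.card_pos, Finset.card_erase_of_mem haS]; omega
  obtain ⟨x₀, hx₀⟩ := h1
  have hx₀S : x₀ ∈ S := Finset.mem_of_mem_erase hx₀
  have hx₀a : x₀ ≠ a := Finset.ne_of_mem_erase hx₀
  set K := Submodule.span ℝ ({x₀ - a} : Set (EuclideanSpace ℝ (Fin d))) with hK
  set T := ((S.erase a).erase x₀).image (fun y => y - a) with hTdef
  have hT : ∀ v ∈ T, v ∉ K := by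
    rintro v hv
    obtain ⟨y, hy, rfl⟩ := Finset.mem_image.1 hv
    have hyx₀ : y ≠ x₀ := Finset.ne_of_mem_erase hy
    have hy' := Finset.mem_of_mem_erase hy
    have hya : y ≠ a := Finset.ne_of_mem_erase hy'
    have hyS : y ∈ S := Finset.mem_of_mem_erase hy'
    exact notMem_span_of_no_collinear haS hnc hx₀S hyS hx₀a hya hyx₀
  obtain ⟨u, huK, hu⟩ := exists_generic K T hT
  have horth : ∀ z ∈ K, ⟪z, u⟫ = 0 := (Submodule.mem_orthogonal K u).1 huK
  have hu₀ : ⟪x₀ - a, u⟫ = 0 := horth _ (Submodule.mem_span_singleton_self _)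
  have hzero : S.filter (fun x => ⟪x - a, u⟫ = 0) = {a, x₀} := by
    ext x
    rw [Finset.mem_filter]
    constructor
    · rintro ⟨hxS, hx0⟩
      by_contra hmem
      simp only [Finset.mem_insert, Finset.mem_singleton] at hmem
      push_neg at hmem
      have : x - a ∈ T := Finset.mem_image.2
        ⟨x, Finset.mem_erase.2 ⟨hmem.2, Finset.mem_erase.2 ⟨hmem.1, hxS⟩⟩, rfl⟩
      exact hu _ this hx0
    · intro hmem
      rcases Finset.mem_insert.1 hmem with rfl | hx
      · exact ⟨haS, by simp⟩
      · rw [Finset.mem_singleton] at hx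
        subst hx
        exact ⟨hx₀S, hu₀⟩
  have hpush : S.filter (fun x => ⟪x - a, u⟫ = 0 ∧ 0 < ⟪x - a, x₀ - a⟫) = {x₀} := by
    ext x
    rw [Finset.mem_filter, Finset.mem_singleton]
    constructor
    · rintro ⟨hxS, hx0, hxw⟩
      have : x ∈ ({a, x₀} : Finset (EuclideanSpace ℝ (Fin d))) := by
        rw [← hzero]; exact Finset.mem_filter.2 ⟨hxS, hx0⟩
      rcases Finset.mem_insert.1 this with rfl | h
      · simp at hxw
      · exact Finset.mem_singleton.1 h
    · rintro rfl
      exact ⟨hx₀S, hu₀, by rw [real_inner_self_eq_norm_sq]; exact pow_pos (norm_pos_iff.mpr (sub_ne_zero.2 hx₀a)) 2⟩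
  obtain ⟨hp1, hp2⟩ := double_push Hhalf
    (by rw [hpush]; exact ⟨x₀, Finset.mem_singleton_self x₀⟩)
  rw [hpush] at hp1 hp2
  have hpart := count_partition S a u
  rw [hzero] at hpart
  have hc2 : ({a, x₀} : Finset (EuclideanSpace ℝ (Fin d))).card = 2 := by
    rw [Finset.card_insert_of_notMem (by simp [Ne.symm hx₀a]), Finset.card_singleton]
  rw [hc2] at hpart
  simp only [Finset.card_singleton] at hp1 hp2
  obtain ⟨k, hk⟩ := hodd
  omega

end MainCore
section MainEven

variable {d : ℕ}

local notation "E" => EuclideanSpace ℝ (Fin d)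

lemma core_even {S : Finset E} {a : E} (hcard : 3 ≤ S.card)
    (Hhalf : ∀ v : E, v ≠ 0 → 2 * (S.filter fun x => 0 < ⟪x - a, v⟫).card ≤ S.card) :
    HasCollinearTriple S ∨ HasCoplanarQuad S := by
  classical
  by_contra hcon
  push_neg at hcon
  obtain ⟨hnc, hnp⟩ := hcon
  by_cases haS : a ∈ S
  · -- a is a voter
    have h2 : 1 < (S.erase a).card := by rw [Finset.card_erase_of_mem haS]; omega
    obtain ⟨x₀, x₁, hx₀m, hx₁m, hx01⟩ := Finset.one_lt_card_iff.1 h2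
    have hx₀S : x₀ ∈ S := Finset.mem_of_mem_erase hx₀m
    have hx₀a : x₀ ≠ a := Finset.ne_of_mem_erase hx₀m
    have hx₁S : x₁ ∈ S := Finset.mem_of_mem_erase hx₁m
    have hx₁a : x₁ ≠ a := Finset.ne_of_mem_erase hx₁m
    have hv₀ : x₀ - a ≠ 0 := sub_ne_zero.2 hx₀a
    have hv₁ : x₁ - a ≠ 0 := sub_ne_zero.2 hx₁a
    have hnotpar : x₁ - a ∉ Submodule.span ℝ {x₀ - a} :=
      notMem_span_of_no_collinear haS hnc hx₀S hx₁S hx₀a hx₁a hx01.symm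
    set K := Submodule.span ℝ ({x₀ - a, x₁ - a} : Set (EuclideanSpace ℝ (Fin d))) with hK
    set T := (((S.erase a).erase x₀).erase x₁).image (fun y => y - a) with hTdef
    have hT : ∀ v ∈ T, v ∉ K := by
      rintro v hv hvK
      obtain ⟨y, hy, rfl⟩ := Finset.mem_image.1 hv
      have hyx₁ : y ≠ x₁ := Finset.ne_of_mem_erase hy
      have hy' := Finset.mem_of_mem_erase hy
      have hyx₀ : y ≠ x₀ := Finset.ne_of_mem_erase hy'
      have hy'' := Finset.mem_of_mem_erase hy'
      have hya : y ≠ a := Finset.ne_of_mem_erase hy''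
      have hyS : y ∈ S := Finset.mem_of_mem_erase hy''
      apply hnp
      refine ⟨a, haS, x₀, hx₀S, x₁, hx₁S, y, hyS, Ne.symm hx₀a, Ne.symm hx₁a, Ne.symm hya,
        hx01, Ne.symm hyx₀, Ne.symm hyx₁, ?_⟩
      apply coplanar_of_sub_mem_span (a := a) (v := x₀ - a) (w := x₁ - a)
      intro p hp
      rcases hp with rfl | rfl | rfl | rfl
      · simp
      · exact Submodule.subset_span (Set.mem_insert _ _)
      · exact Submodule.subset_span (Set.mem_insert_iff.2 (Or.inr rfl))
      · exact hvK
    obtain ⟨u, huK, hu⟩ := exists_generic K T hT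
    have horth : ∀ z ∈ K, ⟪z, u⟫ = 0 := (Submodule.mem_orthogonal K u).1 huK
    have hu₀ : ⟪x₀ - a, u⟫ = 0 := horth _ (Submodule.subset_span (Set.mem_insert _ _))
    have hu₁ : ⟪x₁ - a, u⟫ = 0 :=
      horth _ (Submodule.subset_span (Set.mem_insert_iff.2 (Or.inr rfl)))
    have hzero : S.filter (fun x => ⟪x - a, u⟫ = 0) = {a, x₀, x₁} := by
      ext x
      rw [Finset.mem_filter]
      constructor
      · rintro ⟨hxS, hx0⟩
        by_contra hmem
        simp only [Finset.mem_insert, Finset.mem_singleton] at hmem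
        push_neg at hmem
        have : x - a ∈ T := Finset.mem_image.2
          ⟨x, Finset.mem_erase.2 ⟨hmem.2.2, Finset.mem_erase.2
            ⟨hmem.2.1, Finset.mem_erase.2 ⟨hmem.1, hxS⟩⟩⟩, rfl⟩
        exact hu _ this hx0
      · intro hmem
        rcases Finset.mem_insert.1 hmem with rfl | hx
        · exact ⟨haS, by simp⟩
        · rcases Finset.mem_insert.1 hx with rfl | hx'
          · exact ⟨hx₀S, hu₀⟩
          · rw [Finset.mem_singleton] at hx'
            subst hx'
            exact ⟨hx₁S, hu₁⟩
    -- the pushing direction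
    set w : EuclideanSpace ℝ (Fin d) := ‖x₁ - a‖ • (x₀ - a) + ‖x₀ - a‖ • (x₁ - a) with hw
    have hn₀ : (0:ℝ) < ‖x₀ - a‖ := norm_pos_iff.mpr hv₀
    have hn₁ : (0:ℝ) < ‖x₁ - a‖ := norm_pos_iff.mpr hv₁
    have hinlt : -(‖x₀ - a‖ * ‖x₁ - a‖) < ⟪x₀ - a, x₁ - a⟫ := by
      have hne' : ‖(-(x₁ - a))‖ • (x₀ - a) ≠ ‖x₀ - a‖ • (-(x₁ - a)) := by
        intro heq
        apply hnotpar
        rw [Submodule.mem_span_singleton]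
        refine ⟨-(‖x₁ - a‖ / ‖x₀ - a‖), ?_⟩
        rw [norm_neg] at heq
        have h1 : (-(‖x₁ - a‖ / ‖x₀ - a‖)) • (x₀ - a)
            = (-(1 / ‖x₀ - a‖)) • (‖x₁ - a‖ • (x₀ - a)) := by
          rw [smul_smul]; ring_nf
        rw [h1, heq, smul_smul]
        have : -(1 / ‖x₀ - a‖) * ‖x₀ - a‖ = -1 := by field_simp
        rw [this]
        simp
      have hlt := inner_lt_norm_mul_iff_real.2 hne'
      rw [inner_neg_right, norm_neg] at hlt
      linarith
    have hw₀ : 0 < ⟪x₀ - a, w⟫ := by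
      have e : ⟪x₀ - a, w⟫ = ‖x₁ - a‖ * ⟪x₀ - a, x₀ - a⟫ + ‖x₀ - a‖ * ⟪x₀ - a, x₁ - a⟫ := by
        rw [hw, inner_add_right, real_inner_smul_right, real_inner_smul_right]
      rw [e, real_inner_self_eq_norm_sq]
      nlinarith
    have hw₁ : 0 < ⟪x₁ - a, w⟫ := by
      have e : ⟪x₁ - a, w⟫ = ‖x₁ - a‖ * ⟪x₁ - a, x₀ - a⟫ + ‖x₀ - a‖ * ⟪x₁ - a, x₁ - a⟫ := by
        rw [hw, inner_add_right, real_inner_smul_right, real_inner_smul_right]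
      rw [e, real_inner_self_eq_norm_sq, real_inner_comm]
      nlinarith
    have hpush : S.filter (fun x => ⟪x - a, u⟫ = 0 ∧ 0 < ⟪x - a, w⟫) = {x₀, x₁} := by
      ext x
      rw [Finset.mem_filter]
      constructor
      · rintro ⟨hxS, hx0, hxw⟩
        have : x ∈ ({a, x₀, x₁} : Finset (EuclideanSpace ℝ (Fin d))) := by
          rw [← hzero]; exact Finset.mem_filter.2 ⟨hxS, hx0⟩
        rcases Finset.mem_insert.1 this with rfl | h
        · simp at hxw
        · exact h
      · intro hmem
        rcases Finset.mem_insert.1 hmem with rfl | hx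
        · exact ⟨hx₀S, hu₀, hw₀⟩
        · rw [Finset.mem_singleton] at hx
          subst hx
          exact ⟨hx₁S, hu₁, hw₁⟩
    obtain ⟨hp1, hp2⟩ := double_push Hhalf
      (by rw [hpush]; exact ⟨x₀, Finset.mem_insert_self _ _⟩)
    rw [hpush] at hp1 hp2
    have hpart := count_partition S a u
    rw [hzero] at hpart
    have hc3 : ({a, x₀, x₁} : Finset (EuclideanSpace ℝ (Fin d))).card = 3 := by
      rw [Finset.card_insert_of_notMem (by simp [Ne.symm hx₀a, Ne.symm hx₁a]),
        Finset.card_insert_of_notMem (by simp [hx01]), Finset.card_singleton]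
    have hc2 : ({x₀, x₁} : Finset (EuclideanSpace ℝ (Fin d))).card = 2 := by
      rw [Finset.card_insert_of_notMem (by simp [hx01]), Finset.card_singleton]
    rw [hc3] at hpart
    rw [hc2] at hp1 hp2
    omega
  · -- a is not a voter
    have hvne : ∀ x ∈ S, x - a ≠ 0 := fun x hx => sub_ne_zero.2 (fun h => haS (h ▸ hx))
    have partner : ∀ x ∈ S, ∃ y ∈ S, y ≠ x ∧ y - a ∈ Submodule.span ℝ {x - a} := by
      intro x hx
      by_contra hp'
      push_neg at hp'
      set T := (S.erase x).image (fun y => y - a) with hTdef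
      have hT : ∀ v ∈ T, v ∉ Submodule.span ℝ ({x - a} : Set (EuclideanSpace ℝ (Fin d))) := by
        rintro v hv
        obtain ⟨y, hy, rfl⟩ := Finset.mem_image.1 hv
        exact hp' y (Finset.mem_of_mem_erase hy) (Finset.ne_of_mem_erase hy)
      obtain ⟨u, huK, hu⟩ := exists_generic _ T hT
      have hux : ⟪x - a, u⟫ = 0 :=
        (Submodule.mem_orthogonal _ u).1 huK _ (Submodule.mem_span_singleton_self _)
      have hzero : S.filter (fun z => ⟪z - a, u⟫ = 0) = {x} := by
        ext z
        rw [Finset.mem_filter, Finset.mem_singleton]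
        constructor
        · rintro ⟨hzS, hz0⟩
          by_contra hzx
          exact hu _ (Finset.mem_image.2 ⟨z, Finset.mem_erase.2 ⟨hzx, hzS⟩, rfl⟩) hz0
        · rintro rfl
          exact ⟨hx, hux⟩
      have hpush : S.filter (fun z => ⟪z - a, u⟫ = 0 ∧ 0 < ⟪z - a, x - a⟫) = {x} := by
        ext z
        rw [Finset.mem_filter, Finset.mem_singleton]
        constructor
        · rintro ⟨hzS, hz0, -⟩
          have : z ∈ ({x} : Finset (EuclideanSpace ℝ (Fin d))) := by
            rw [← hzero]; exact Finset.mem_filter.2 ⟨hzS, hz0⟩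
          exact Finset.mem_singleton.1 this
        · rintro rfl
          exact ⟨hx, hux,
            by rw [real_inner_self_eq_norm_sq]; exact pow_pos (norm_pos_iff.mpr (hvne _ hx)) 2⟩
      obtain ⟨hp1, hp2⟩ := double_push Hhalf
        (by rw [hpush]; exact ⟨x, Finset.mem_singleton_self x⟩)
      rw [hpush] at hp1 hp2
      have hpart := count_partition S a u
      rw [hzero] at hpart
      simp only [Finset.card_singleton] at hp1 hp2 hpart
      omega
    obtain ⟨x₁, hx₁⟩ := Finset.card_pos.1 (by omega : 0 < S.card)
    by_cases hall : ∀ x ∈ S, x - a ∈ Submodule.span ℝ {x₁ - a}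
    · obtain ⟨p, q, r, hp, hq, hr, hpq, hpr, hqr⟩ :=
        Finset.two_lt_card_iff.1 (by omega : 2 < S.card)
      refine absurd ?_ hnc
      refine ⟨p, hp, q, hq, r, hr, hpq, hpr, hqr, ?_⟩
      apply collinear_of_sub_mem_span (a := a) (v := x₁ - a)
      intro z hz
      rcases hz with rfl | rfl | rfl
      · exact hall _ hp
      · exact hall _ hq
      · exact hall _ hr
    · push_neg at hall
      obtain ⟨x₂, hx₂S, hx₂⟩ := hall
      obtain ⟨y₁, hy₁S, hy₁ne, hy₁sp⟩ := partner x₁ hx₁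
      obtain ⟨y₂, hy₂S, hy₂ne, hy₂sp⟩ := partner x₂ hx₂S
      have hx₁sp : x₁ - a ∈ Submodule.span ℝ {x₁ - a} := Submodule.mem_span_singleton_self _
      have claimA : ∀ z : EuclideanSpace ℝ (Fin d), z - a ≠ 0 →
          z - a ∈ Submodule.span ℝ {x₂ - a} → z - a ∉ Submodule.span ℝ {x₁ - a} := by
        intro z hz0 hz2 hz1
        apply hx₂
        rw [Submodule.mem_span_singleton] at hz2 hz1 ⊢
        obtain ⟨t, ht⟩ := hz2
        obtain ⟨s, hs⟩ := hz1
        have ht0 : t ≠ 0 := by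
          rintro rfl
          rw [zero_smul] at ht
          exact hz0 ht.symm
        exact ⟨t⁻¹ * s, by rw [mul_smul, hs, ← ht, smul_smul, inv_mul_cancel₀ ht0, one_smul]⟩
      have h12 : x₁ ≠ x₂ := fun h => hx₂ (h ▸ hx₁sp)
      have h1y2 : x₁ ≠ y₂ := by
        intro h
        exact claimA x₁ (hvne x₁ hx₁) (h ▸ hy₂sp) hx₁sp
      have hy1x2 : y₁ ≠ x₂ := by
        intro h
        exact hx₂ (h ▸ hy₁sp)
      have hy1y2 : y₁ ≠ y₂ := by
        intro h
        exact claimA y₁ (hvne y₁ hy₁S) (h ▸ hy₂sp) hy₁sp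
      refine absurd ?_ hnp
      refine ⟨x₁, hx₁, y₁, hy₁S, x₂, hx₂S, y₂, hy₂S, Ne.symm hy₁ne, h12, h1y2, hy1x2, hy1y2,
        Ne.symm hy₂ne, ?_⟩
      apply coplanar_of_sub_mem_span (a := a) (v := x₁ - a) (w := x₂ - a)
      have hmono1 : Submodule.span ℝ ({x₁ - a} : Set (EuclideanSpace ℝ (Fin d)))
          ≤ Submodule.span ℝ {x₁ - a, x₂ - a} :=
        Submodule.span_mono (by simp)
      have hmono2 : Submodule.span ℝ ({x₂ - a} : Set (EuclideanSpace ℝ (Fin d)))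
          ≤ Submodule.span ℝ {x₁ - a, x₂ - a} :=
        Submodule.span_mono (by simp)
      intro z hz
      rcases hz with rfl | rfl | rfl | rfl
      · exact hmono1 hx₁sp
      · exact hmono1 hy₁sp
      · exact hmono2 (Submodule.mem_span_singleton_self _)
      · exact hmono2 hy₂sp

lemma core_main {S : Finset E} {a : E} (hcard : 3 ≤ S.card)
    (Hhalf : ∀ v : E, v ≠ 0 → 2 * (S.filter fun x => 0 < ⟪x - a, v⟫).card ≤ S.card) :
    HasCollinearTriple S ∨ (Even S.card ∧ HasCoplanarQuad S) := by
  rcases Nat.even_or_odd S.card with he | ho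
  · rcases core_even hcard Hhalf with h | h
    · exact Or.inl h
    · exact Or.inr ⟨he, h⟩
  · exact Or.inl (core_odd hcard ho Hhalf)

end MainEven
section AIHelpers

variable {F : Type*} [NormedAddCommGroup F] [InnerProductSpace ℝ F] [FiniteDimensional ℝ F]

lemma ai_triple {q₀ q₁ q₂ : F} (h1 : q₁ - q₀ ≠ 0)
    (h2 : q₂ - q₀ ∉ Submodule.span ℝ {q₁ - q₀}) :
    AffineIndependent ℝ ![q₀, q₁, q₂] := by
  rw [affineIndependent_iff_not_collinear_set]
  intro hcol
  rw [collinear_iff_of_mem (Set.mem_insert q₀ _)] at hcol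
  obtain ⟨v, hv⟩ := hcol
  obtain ⟨t₁, ht₁⟩ := hv q₁ (by simp)
  obtain ⟨t₂, ht₂⟩ := hv q₂ (by simp)
  have e₁ : q₁ - q₀ = t₁ • v := by rw [ht₁]; simp [vadd_eq_add]
  have e₂ : q₂ - q₀ = t₂ • v := by rw [ht₂]; simp [vadd_eq_add]
  have ht₁0 : t₁ ≠ 0 := by
    rintro rfl
    rw [zero_smul] at e₁
    exact h1 e₁
  apply h2
  rw [Submodule.mem_span_singleton]
  refine ⟨t₂ * t₁⁻¹, ?_⟩
  rw [e₁, e₂, smul_smul, mul_assoc, inv_mul_cancel₀ ht₁0, mul_one]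

lemma ai_quad {q₀ q₁ q₂ q₃ : F} (h1 : q₁ - q₀ ≠ 0)
    (h2 : q₂ - q₀ ∉ Submodule.span ℝ {q₁ - q₀})
    (h3 : q₃ - q₀ ∉ Submodule.span ℝ {q₁ - q₀, q₂ - q₀}) :
    AffineIndependent ℝ ![q₀, q₁, q₂, q₃] := by
  rw [affineIndependent_iff_linearIndependent_vsub ℝ _ 0]
  have e : (⟨3, by decide⟩ : {x : Fin 4 // x ≠ 0}) ≠ ⟨2, by decide⟩ := by simp
  let eqv : Fin 3 ≃ {x : Fin 4 // x ≠ 0} :=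
    { toFun := ![⟨3, by decide⟩, ⟨2, by decide⟩, ⟨1, by decide⟩]
      invFun := fun i => if i.1 = 3 then 0 else if i.1 = 2 then 1 else 2
      left_inv := by decide
      right_inv := by decide }
  rw [← linearIndependent_equiv eqv]
  have hcomp : (fun i : {x : Fin 4 // x ≠ 0} =>
      (![q₀, q₁, q₂, q₃] i -ᵥ ![q₀, q₁, q₂, q₃] 0 : F)) ∘ eqv
      = ![q₃ - q₀, q₂ - q₀, q₁ - q₀] := by
    funext i
    fin_cases i <;> simp [eqv, vsub_eq_sub]
  rw [hcomp]
  have li1 : LinearIndependent ℝ ![q₁ - q₀] := by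
    refine linearIndependent_unique_iff.2 ?_
    simpa using h1
  have li2 : LinearIndependent ℝ ![q₂ - q₀, q₁ - q₀] := by
    have : (![q₂ - q₀, q₁ - q₀] : Fin 2 → F) = Fin.cons (q₂ - q₀) ![q₁ - q₀] := rfl
    rw [this, linearIndependent_fin_cons]
    refine ⟨li1, ?_⟩
    intro hmem
    apply h2
    have : Set.range (![q₁ - q₀] : Fin 1 → F) = {q₁ - q₀} := by
      simp [Matrix.range_cons, Matrix.range_empty]
    rwa [this] at hmem
  have : (![q₃ - q₀, q₂ - q₀, q₁ - q₀] : Fin 3 → F)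
      = Fin.cons (q₃ - q₀) ![q₂ - q₀, q₁ - q₀] := rfl
  rw [this, linearIndependent_fin_cons]
  refine ⟨li2, ?_⟩
  intro hmem
  apply h3
  have hr : Set.range (![q₂ - q₀, q₁ - q₀] : Fin 2 → F) = {q₂ - q₀, q₁ - q₀} := by
    simp [Matrix.range_cons, Matrix.range_empty]
    exact Set.pair_comm _ _
  rw [hr, Set.pair_comm] at hmem
  exact hmem

lemma collinear_imp_not_ai {p₁ p₂ p₃ : F} (h : Collinear ℝ ({p₁, p₂, p₃} : Set F)) :
    ¬ AffineIndependent ℝ ![p₁, p₂, p₃] :=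
  fun hai => (affineIndependent_iff_not_collinear_set.1 hai) h

lemma coplanar_imp_not_ai {p₁ p₂ p₃ p₄ : F} (h : Coplanar ℝ ({p₁, p₂, p₃, p₄} : Set F)) :
    ¬ AffineIndependent ℝ ![p₁, p₂, p₃, p₄] := by
  intro hai
  have hr : Set.range (![p₁, p₂, p₃, p₄] : Fin 4 → F) = {p₁, p₂, p₃, p₄} := by
    ext x
    simp [Matrix.range_cons, Matrix.range_empty]
    tauto
  have hfr := (affineIndependent_iff_not_finrank_vectorSpan_le ℝ ![p₁, p₂, p₃, p₄]
    (by simp : Fintype.card (Fin 4) = 2 + 2)).1 hai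
  apply hfr
  rw [hr]
  exact h.finrank_le_two

lemma isOpen_ai_tuple {m : ℕ} :
    IsOpen {p : Fin (m + 1) → F | AffineIndependent ℝ p} := by
  have heq : {p : Fin (m + 1) → F | AffineIndependent ℝ p}
      = (fun p : Fin (m + 1) → F => fun i : {x : Fin (m + 1) // x ≠ 0} => p i - p 0) ⁻¹'
        {q : {x : Fin (m + 1) // x ≠ 0} → F | LinearIndependent ℝ q} := by
    ext p
    simp only [Set.mem_setOf_eq, Set.mem_preimage]
    rw [affineIndependent_iff_linearIndependent_vsub ℝ p 0]
    rfl
  rw [heq]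
  exact isOpen_setOf_linearIndependent.preimage
    (continuous_pi fun i => (continuous_apply i.1).sub (continuous_apply 0))

end AIHelpers
section Topology

variable (d n : ℕ)

local notation "X" => (Fin n → EuclideanSpace ℝ (Fin d))

def Bad3 (t : Fin n × Fin n × Fin n) : Set (Fin n → EuclideanSpace ℝ (Fin d)) :=
  {x | (t.1 ≠ t.2.1 ∧ t.1 ≠ t.2.2 ∧ t.2.1 ≠ t.2.2) ∧
    ¬ AffineIndependent ℝ ![x t.1, x t.2.1, x t.2.2]}

def Bad4 (t : Fin n × Fin n × Fin n × Fin n) : Set (Fin n → EuclideanSpace ℝ (Fin d)) :=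
  {x | (Even n ∧ t.1 ≠ t.2.1 ∧ t.1 ≠ t.2.2.1 ∧ t.1 ≠ t.2.2.2 ∧ t.2.1 ≠ t.2.2.1 ∧
      t.2.1 ≠ t.2.2.2 ∧ t.2.2.1 ≠ t.2.2.2) ∧
    ¬ AffineIndependent ℝ ![x t.1, x t.2.1, x t.2.2.1, x t.2.2.2]}

def BadSet : Set (Fin n → EuclideanSpace ℝ (Fin d)) :=
  (⋃ t, Bad3 d n t) ∪ (⋃ t, Bad4 d n t)

variable {d n}

lemma cont3 (i j k : Fin n) :
    Continuous (fun x : X => ![x i, x j, x k]) := by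
  apply continuous_pi
  intro l
  fin_cases l
  · exact continuous_apply i
  · exact continuous_apply j
  · exact continuous_apply k

lemma cont4 (i j k l : Fin n) :
    Continuous (fun x : X => ![x i, x j, x k, x l]) := by
  apply continuous_pi
  intro m
  fin_cases m
  · exact continuous_apply i
  · exact continuous_apply j
  · exact continuous_apply k
  · exact continuous_apply l

lemma isClosed_Bad3 (t : Fin n × Fin n × Fin n) : IsClosed (Bad3 d n t) := by
  by_cases hc : t.1 ≠ t.2.1 ∧ t.1 ≠ t.2.2 ∧ t.2.1 ≠ t.2.2
  · have heq : Bad3 d n t = ((fun x : X => ![x t.1, x t.2.1, x t.2.2]) ⁻¹'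
        {p : Fin 3 → EuclideanSpace ℝ (Fin d) | AffineIndependent ℝ p})ᶜ := by
      ext x
      simp only [Bad3, Set.mem_setOf_eq, Set.mem_compl_iff, Set.mem_preimage]
      tauto
    rw [heq]
    exact ((isOpen_ai_tuple (m := 2)).preimage (cont3 t.1 t.2.1 t.2.2)).isClosed_compl
  · have heq : Bad3 d n t = ∅ := by
      rw [Set.eq_empty_iff_forall_notMem]
      intro x hx
      exact hc hx.1
    rw [heq]
    exact isClosed_empty

lemma isClosed_Bad4 (t : Fin n × Fin n × Fin n × Fin n) : IsClosed (Bad4 d n t) := by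
  by_cases hc : Even n ∧ t.1 ≠ t.2.1 ∧ t.1 ≠ t.2.2.1 ∧ t.1 ≠ t.2.2.2 ∧ t.2.1 ≠ t.2.2.1 ∧
      t.2.1 ≠ t.2.2.2 ∧ t.2.2.1 ≠ t.2.2.2
  · have heq : Bad4 d n t = ((fun x : X => ![x t.1, x t.2.1, x t.2.2.1, x t.2.2.2]) ⁻¹'
        {p : Fin 4 → EuclideanSpace ℝ (Fin d) | AffineIndependent ℝ p})ᶜ := by
      ext x
      simp only [Bad4, Set.mem_setOf_eq, Set.mem_compl_iff, Set.mem_preimage]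
      tauto
    rw [heq]
    exact ((isOpen_ai_tuple (m := 3)).preimage (cont4 t.1 t.2.1 t.2.2.1 t.2.2.2)).isClosed_compl
  · have heq : Bad4 d n t = ∅ := by
      rw [Set.eq_empty_iff_forall_notMem]
      intro x hx
      exact hc hx.1
    rw [heq]
    exact isClosed_empty

lemma dense_compl_Bad3 (hd2 : 2 ≤ d) (t : Fin n × Fin n × Fin n) :
    Dense (Bad3 d n t)ᶜ := by
  by_cases hc : t.1 ≠ t.2.1 ∧ t.1 ≠ t.2.2 ∧ t.2.1 ≠ t.2.2
  · rw [Metric.dense_iff]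
    intro x r hr
    have hfr : 1 < Module.finrank ℝ (EuclideanSpace ℝ (Fin d)) := by
      rw [finrank_euclideanSpace_fin]; omega
    obtain ⟨q₁, hq₁d, hq₁⟩ := exists_near_sub_notMem
      (span_singleton_ne_top hfr 0) (x t.1) (x t.2.1) hr
    have hv1 : q₁ - x t.1 ≠ 0 := fun h => hq₁ (by rw [h]; exact Submodule.zero_mem _)
    obtain ⟨q₂, hq₂d, hq₂⟩ := exists_near_sub_notMem
      (span_singleton_ne_top hfr (q₁ - x t.1)) (x t.1) (x t.2.2) hr
    set y : X := Function.update (Function.update x t.2.1 q₁) t.2.2 q₂ with hy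
    have hy1 : y t.1 = x t.1 := by
      rw [hy, Function.update_of_ne hc.2.1, Function.update_of_ne hc.1]
    have hy2 : y t.2.1 = q₁ := by
      rw [hy, Function.update_of_ne hc.2.2, Function.update_self]
    have hy3 : y t.2.2 = q₂ := by
      rw [hy, Function.update_self]
    refine ⟨y, ?_, ?_⟩
    · rw [Metric.mem_ball, dist_pi_lt_iff hr]
      intro l
      by_cases h3 : l = t.2.2
      · subst h3; rw [hy3]; exact hq₂d
      · by_cases h2 : l = t.2.1
        · subst h2
          rw [hy, Function.update_of_ne h3, Function.update_self]
          exact hq₁d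
        · rw [hy, Function.update_of_ne h3, Function.update_of_ne h2]
          simpa using hr
    · intro hmem
      apply hmem.2
      rw [hy1, hy2, hy3]
      exact ai_triple hv1 hq₂
  · have heq : Bad3 d n t = ∅ := by
      rw [Set.eq_empty_iff_forall_notMem]
      intro x hx
      exact hc hx.1
    rw [heq, Set.compl_empty]
    exact dense_univ

lemma dense_compl_Bad4 (hEd : Even n → 3 ≤ d) (t : Fin n × Fin n × Fin n × Fin n) :
    Dense (Bad4 d n t)ᶜ := by
  by_cases hc : Even n ∧ t.1 ≠ t.2.1 ∧ t.1 ≠ t.2.2.1 ∧ t.1 ≠ t.2.2.2 ∧ t.2.1 ≠ t.2.2.1 ∧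
      t.2.1 ≠ t.2.2.2 ∧ t.2.2.1 ≠ t.2.2.2
  · rw [Metric.dense_iff]
    intro x r hr
    have hd3 : 3 ≤ d := hEd hc.1
    have hfr : 1 < Module.finrank ℝ (EuclideanSpace ℝ (Fin d)) := by
      rw [finrank_euclideanSpace_fin]; omega
    have hfr2 : 2 < Module.finrank ℝ (EuclideanSpace ℝ (Fin d)) := by
      rw [finrank_euclideanSpace_fin]; omega
    obtain ⟨q₁, hq₁d, hq₁⟩ := exists_near_sub_notMem
      (span_singleton_ne_top hfr 0) (x t.1) (x t.2.1) hr
    have hv1 : q₁ - x t.1 ≠ 0 := fun h => hq₁ (by rw [h]; exact Submodule.zero_mem _)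
    obtain ⟨q₂, hq₂d, hq₂⟩ := exists_near_sub_notMem
      (span_singleton_ne_top hfr (q₁ - x t.1)) (x t.1) (x t.2.2.1) hr
    obtain ⟨q₃, hq₃d, hq₃⟩ := exists_near_sub_notMem
      (span_pair_ne_top hfr2 (q₁ - x t.1) (q₂ - x t.1)) (x t.1) (x t.2.2.2) hr
    set y : X := Function.update (Function.update (Function.update x t.2.1 q₁) t.2.2.1 q₂)
      t.2.2.2 q₃ with hy
    obtain ⟨-, h12, h13, h14, h23, h24, h34⟩ := hc
    have hy1 : y t.1 = x t.1 := by
      rw [hy, Function.update_of_ne h14, Function.update_of_ne h13,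
        Function.update_of_ne h12]
    have hy2 : y t.2.1 = q₁ := by
      rw [hy, Function.update_of_ne h24, Function.update_of_ne h23, Function.update_self]
    have hy3 : y t.2.2.1 = q₂ := by
      rw [hy, Function.update_of_ne h34, Function.update_self]
    have hy4 : y t.2.2.2 = q₃ := by
      rw [hy, Function.update_self]
    refine ⟨y, ?_, ?_⟩
    · rw [Metric.mem_ball, dist_pi_lt_iff hr]
      intro l
      by_cases h4 : l = t.2.2.2
      · subst h4; rw [hy4]; exact hq₃d
      · by_cases h3 : l = t.2.2.1
        · subst h3
          rw [hy, Function.update_of_ne h4, Function.update_self]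
          exact hq₂d
        · by_cases h2 : l = t.2.1
          · subst h2
            rw [hy, Function.update_of_ne h4, Function.update_of_ne h3,
              Function.update_self]
            exact hq₁d
          · rw [hy, Function.update_of_ne h4, Function.update_of_ne h3,
              Function.update_of_ne h2]
            simpa using hr
    · intro hmem
      apply hmem.2
      rw [hy1, hy2, hy3, hy4]
      exact ai_quad hv1 hq₂ hq₃
  · have heq : Bad4 d n t = ∅ := by
      rw [Set.eq_empty_iff_forall_notMem]
      intro x hx
      exact hc hx.1
    rw [heq, Set.compl_empty]
    exact dense_univ

lemma isClosed_BadSet : IsClosed (BadSet d n) :=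
  IsClosed.union (isClosed_iUnion_of_finite fun t => isClosed_Bad3 t)
    (isClosed_iUnion_of_finite fun t => isClosed_Bad4 t)

lemma interior_BadSet_empty (hd2 : 2 ≤ d) (hEd : Even n → 3 ≤ d) :
    interior (BadSet d n) = ∅ := by
  rw [interior_eq_empty_iff_dense_compl]
  have heq : (BadSet d n)ᶜ = (⋂ t, (Bad3 d n t)ᶜ) ∩ (⋂ t, (Bad4 d n t)ᶜ) := by
    rw [BadSet, Set.compl_union, Set.compl_iUnion, Set.compl_iUnion]
  rw [heq]
  refine Dense.inter_of_isOpen_left ?_ ?_ ?_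
  · exact dense_iInter_of_isOpen (fun t => (isClosed_Bad3 t).isOpen_compl)
      (fun t => dense_compl_Bad3 hd2 t)
  · exact dense_iInter_of_isOpen (fun t => (isClosed_Bad4 t).isOpen_compl)
      (fun t => dense_compl_Bad4 hEd t)
  · exact isOpen_iInter_of_finite (fun t => (isClosed_Bad3 t).isOpen_compl)

lemma isOpen_injective_set :
    IsOpen {f : Fin n → EuclideanSpace ℝ (Fin d) | Function.Injective f} := by
  have heq : {f : Fin n → EuclideanSpace ℝ (Fin d) | Function.Injective f}
      = ⋂ p : {p : Fin n × Fin n // p.1 ≠ p.2}, {f : X | f p.1.1 ≠ f p.1.2} := by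
    ext f
    simp only [Set.mem_setOf_eq, Set.mem_iInter]
    constructor
    · rintro hf ⟨⟨i, j⟩, hij⟩ heq
      exact hij (hf heq)
    · intro h i j heq
      by_contra hne
      exact h ⟨(i, j), hne⟩ heq
  rw [heq]
  apply isOpen_iInter_of_finite
  rintro ⟨⟨i, j⟩, hij⟩
  have : {f : X | f i ≠ f j}
      = (fun f : X => (f i, f j)) ⁻¹' (Set.diagonal (EuclideanSpace ℝ (Fin d)))ᶜ := by
    ext f
    simp [Set.diagonal]
  rw [this]
  exact (isClosed_diagonal.isOpen_compl).preimage
    ((continuous_apply i).prodMk (continuous_apply j))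

end Topology
open scoped Classical in
/-- for `n ≥ 3`, and either `d = 2` with `n` odd or `d ≥ 3`, the set of
injective `n`-tuples of points of `ℝ^d` whose underlying voter set is an Alice win is
nowhere dense in the space `M` of injective `n`-tuples (with its subspace topology). -/
theorem stmt16 (d n : ℕ) (hd : 1 ≤ d) (hn : 3 ≤ n)
    (hcase : (d = 2 ∧ Odd n) ∨ 3 ≤ d) :
    IsNowhereDense
      {x : {f : Fin n → EuclideanSpace ℝ (Fin d) // Function.Injective f} |
        ∃ a, IsWinningPoint (Finset.image x.1 Finset.univ) a} := by
  classical
  have hd2 : 2 ≤ d := by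
    rcases hcase with ⟨h, -⟩ | h <;> omega
  have hEd : Even n → 3 ≤ d := by
    intro he
    rcases hcase with ⟨-, hodd⟩ | h
    · exact absurd he (Nat.not_even_iff_odd.2 hodd)
    · exact h
  set A := {x : {f : Fin n → EuclideanSpace ℝ (Fin d) // Function.Injective f} |
    ∃ a, IsWinningPoint (Finset.image x.1 Finset.univ) a} with hA
  have hsub : A ⊆ (Subtype.val :
      {f : Fin n → EuclideanSpace ℝ (Fin d) // Function.Injective f} → _) ⁻¹' (BadSet d n) := by
    rintro ⟨x, hinj⟩ ⟨a, hwin⟩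
    have hcardS : (Finset.image x Finset.univ).card = n := by
      rw [Finset.card_image_of_injective _ hinj, Finset.card_univ, Fintype.card_fin]
    have Hhalf : ∀ v : EuclideanSpace ℝ (Fin d), v ≠ 0 →
        2 * ((Finset.image x Finset.univ).filter fun z => 0 < ⟪z - a, v⟫).card
          ≤ (Finset.image x Finset.univ).card :=
      fun v hv => halfspace_of_winning hwin hv
    rcases core_main (by rw [hcardS]; exact hn) Hhalf with hcol | ⟨heven, hcop⟩
    · obtain ⟨p, hp, q, hq, r, hrm, hpq, hpr, hqr, hcoll⟩ := hcol
      obtain ⟨i, -, rfl⟩ := Finset.mem_image.1 hp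
      obtain ⟨j, -, rfl⟩ := Finset.mem_image.1 hq
      obtain ⟨k, -, rfl⟩ := Finset.mem_image.1 hrm
      refine Set.mem_preimage.2 (Set.mem_union_left _ (Set.mem_iUnion.2 ⟨(i, j, k), ?_⟩))
      exact ⟨⟨fun h => hpq (congrArg x h), fun h => hpr (congrArg x h),
        fun h => hqr (congrArg x h)⟩, collinear_imp_not_ai hcoll⟩
    · obtain ⟨p, hp, q, hq, r, hrm, s, hs, hpq, hpr, hps, hqr, hqs, hrs, hcop'⟩ := hcop
      obtain ⟨i, -, rfl⟩ := Finset.mem_image.1 hp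
      obtain ⟨j, -, rfl⟩ := Finset.mem_image.1 hq
      obtain ⟨k, -, rfl⟩ := Finset.mem_image.1 hrm
      obtain ⟨l, -, rfl⟩ := Finset.mem_image.1 hs
      refine Set.mem_preimage.2 (Set.mem_union_right _ (Set.mem_iUnion.2 ⟨(i, j, k, l), ?_⟩))
      refine ⟨⟨by rw [hcardS] at heven; exact heven, fun h => hpq (congrArg x h),
        fun h => hpr (congrArg x h), fun h => hps (congrArg x h),
        fun h => hqr (congrArg x h), fun h => hqs (congrArg x h),
        fun h => hrs (congrArg x h)⟩, coplanar_imp_not_ai hcop'⟩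
  have hclosedB : IsClosed ((Subtype.val :
      {f : Fin n → EuclideanSpace ℝ (Fin d) // Function.Injective f} → _) ⁻¹' (BadSet d n)) :=
    isClosed_BadSet.preimage continuous_subtype_val
  have hclosure : closure A ⊆ (Subtype.val :
      {f : Fin n → EuclideanSpace ℝ (Fin d) // Function.Injective f} → _) ⁻¹' (BadSet d n) :=
    closure_minimal hsub hclosedB
  show interior (closure A) = ∅
  rw [Set.eq_empty_iff_forall_notMem]
  intro z hz
  obtain ⟨U, hUsub, hUopen, hzU⟩ := mem_interior.1 hz
  obtain ⟨V, hVopen, hVU⟩ := isOpen_induced_iff.1 hUopen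
  have hzV : z.1 ∈ V := by
    rw [← hVU] at hzU
    exact hzU
  have hWopen : IsOpen (V ∩ {f : Fin n → EuclideanSpace ℝ (Fin d) | Function.Injective f}) :=
    hVopen.inter isOpen_injective_set
  have hzW : z.1 ∈ V ∩ {f : Fin n → EuclideanSpace ℝ (Fin d) | Function.Injective f} :=
    ⟨hzV, z.2⟩
  have hWsub : V ∩ {f : Fin n → EuclideanSpace ℝ (Fin d) | Function.Injective f}
      ⊆ BadSet d n := by
    rintro w ⟨hwV, hwinj⟩
    have hU : (⟨w, hwinj⟩ : {f : Fin n → EuclideanSpace ℝ (Fin d) // Function.Injective f})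
        ∈ U := by
      rw [← hVU]
      exact hwV
    exact hclosure (hUsub hU)
  have hmem : z.1 ∈ interior (BadSet d n) := mem_interior.2 ⟨_, hWsub, hWopen, hzW⟩
  rw [interior_BadSet_empty hd2 hEd] at hmem
  exact hmem
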